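/- For any n ≥ 2, the maximum over all binary strings s of length n of the number of strings sharing the prefix-suffix composition multiset of s equals 2^{⌊(n-2)/4⌋ + 1}. -/

import Mathlib

/-- The composition of a binary string: (length, number of ones). -/
def comp (t : List Bool) : ℕ × ℕ := (t.length, t.count true)

/-- The prefix-suffix composition multiset of a binary string. -/
def psM (s : List Bool) : Multiset (ℕ × ℕ) :=
  ((List.range s.length).map (fun j => comp (s.take (j + 1))) : Multiset (ℕ × ℕ))
  + ((List.range s.length).map (fun i => comp (s.drop i)) : Multiset (ℕ × ℕ))


lemma count_take_succ (s : List Bool) (k : ℕ) :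
    (s.take k).count true ≤ (s.take (k+1)).count true ∧
    (s.take (k+1)).count true ≤ (s.take k).count true + 1 := by
  rw [List.take_succ]
  rcases h : s[k]? with _ | b
  · simp
  · rcases b <;> simp [List.count_append]

lemma count_psM (s : List Bool) (ℓ v : ℕ) (h1 : 1 ≤ ℓ) (h2 : ℓ ≤ s.length) :
    Multiset.count (ℓ, v) (psM s) =
    (if (s.take ℓ).count true = v then 1 else 0)
      + (if (s.drop (s.length - ℓ)).count true = v then 1 else 0) := by
  rw [psM, Multiset.count_add]
  have hco : ∀ (f : ℕ → ℕ × ℕ),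
      ((List.range s.length).map f : Multiset (ℕ × ℕ))
        = Multiset.map f (Finset.range s.length).val := by
    intro f; rfl
  rw [hco, hco, Multiset.count_map, Multiset.count_map, ← Finset.filter_val,
    ← Finset.filter_val]
  have e1 : Finset.filter (fun a => (ℓ, v) = comp (s.take (a+1))) (Finset.range s.length)
      = if (s.take ℓ).count true = v then {ℓ - 1} else ∅ := by
    ext j
    simp only [Finset.mem_filter, Finset.mem_range, comp, Prod.ext_iff, List.length_take]
    split <;> rename_i hv <;> simp only [Finset.mem_singleton, Finset.notMem_empty,
      iff_false]
    · constructor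
      · rintro ⟨hj, hℓ, -⟩; omega
      · rintro rfl
        refine ⟨by omega, by omega, ?_⟩
        have h3 : ℓ - 1 + 1 = ℓ := by omega
        rw [h3]; omega
    · rintro ⟨hj, hℓ, hv'⟩
      have h3 : j + 1 = ℓ := by omega
      rw [h3] at hv'; exact hv hv'.symm
  have e2 : Finset.filter (fun a => (ℓ, v) = comp (s.drop a)) (Finset.range s.length)
      = if (s.drop (s.length - ℓ)).count true = v then {s.length - ℓ} else ∅ := by
    ext i
    simp only [Finset.mem_filter, Finset.mem_range, comp, Prod.ext_iff, List.length_drop]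
    split <;> rename_i hv <;> simp only [Finset.mem_singleton, Finset.notMem_empty,
      iff_false]
    · constructor
      · rintro ⟨hj, hℓ, -⟩; omega
      · rintro rfl; exact ⟨by omega, by omega, by omega⟩
    · rintro ⟨hj, hℓ, hv'⟩
      have h3 : i = s.length - ℓ := by omega
      rw [h3] at hv'; exact hv hv'.symm
  rw [e1, e2]
  split <;> split <;> simp

lemma pair_aux (pt qt ps qs : ℕ)
    (key : ∀ v, (if pt = v then 1 else 0) + (if qt = v then 1 else 0)
      = (if ps = v then 1 else 0) + (if qs = v then (1:ℕ) else 0)) :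
    (pt = ps ∧ qt = qs) ∨ (pt = qs ∧ qt = ps) := by
  rcases eq_or_ne ps pt with h | h
  · have k2 := key qt
    left
    refine ⟨h.symm, ?_⟩
    split_ifs at k2 <;> omega
  · right
    have k1 := key pt
    have k3 := key ps
    constructor
    · split_ifs at k1 <;> omega
    · split_ifs at k3 <;> omega

/-- the pairwise condition, direction ⇒ -/
lemma pair_of_psM {t s : List Bool} {n : ℕ} (hl : t.length = n) (hs : s.length = n)
    (h : psM t = psM s) (ℓ : ℕ) (h1 : 1 ≤ ℓ) (h2 : ℓ ≤ n) :
    ((t.take ℓ).count true = (s.take ℓ).count true ∧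
      (t.drop (n - ℓ)).count true = (s.drop (n - ℓ)).count true) ∨
    ((t.take ℓ).count true = (s.drop (n - ℓ)).count true ∧
      (t.drop (n - ℓ)).count true = (s.take ℓ).count true) := by
  have key : ∀ v, (if (t.take ℓ).count true = v then 1 else 0)
      + (if (t.drop (n - ℓ)).count true = v then 1 else 0)
      = (if (s.take ℓ).count true = v then 1 else 0)
      + (if (s.drop (n - ℓ)).count true = v then (1:ℕ) else 0) := by
    intro v
    have c1 := count_psM t ℓ v h1 (by omega)
    have c2 := count_psM s ℓ v h1 (by omega)
    rw [hl] at c1; rw [hs] at c2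
    rw [← c1, ← c2, h]
  exact pair_aux _ _ _ _ key
lemma ns_aux (W pk pk1 m1 m2 xk xk1 ym1 ym2 : ℤ)
    (hps : pk ≤ pk1 ∧ pk1 ≤ pk + 1) (hms : m1 ≤ m2 ∧ m2 ≤ m1 + 1)
    (hxs : xk ≤ xk1 ∧ xk1 ≤ xk + 1) (hys : ym1 ≤ ym2 ∧ ym2 ≤ ym1 + 1)
    (hd1 : W - m2 - pk ≠ 0) (hd2 : W - m1 - pk1 ≠ 0)
    (hpck : (xk = pk ∧ ym2 = m2) ∨ (xk = W - m2 ∧ ym2 = W - pk))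
    (hpck1 : (xk1 = pk1 ∧ ym1 = m1) ∨ (xk1 = W - m1 ∧ ym1 = W - pk1)) :
    (xk = pk ↔ xk1 = pk1) := by
  constructor <;> intro h <;> rcases hpck with ⟨h1,h2⟩|⟨h1,h2⟩ <;>
    rcases hpck1 with ⟨h3,h4⟩|⟨h3,h4⟩ <;> omega
def ZP (l : List Bool) (k : ℕ) : ℤ := ((l.take k).count true : ℤ)
def ZW (l : List Bool) : ℤ := (l.count true : ℤ)
def ZB (s : List Bool) (n k : ℕ) : ℤ := ZW s - ZP s (n - k)
def ZD (s : List Bool) (n k : ℕ) : ℤ := ZB s n k - ZP s k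

lemma ZP_zero (l : List Bool) : ZP l 0 = 0 := by simp [ZP]

lemma ZP_step (l : List Bool) (k : ℕ) : ZP l k ≤ ZP l (k+1) ∧ ZP l (k+1) ≤ ZP l k + 1 := by
  have := count_take_succ l k
  unfold ZP
  omega

lemma ZP_top (l : List Bool) (k : ℕ) (h : l.length ≤ k) : ZP l k = ZW l := by
  unfold ZP ZW
  rw [List.take_of_length_le h]

lemma ZP_drop (l : List Bool) (k : ℕ) : ((l.drop k).count true : ℤ) = ZW l - ZP l k := by
  unfold ZP ZW
  have : (l.take k).count true + (l.drop k).count true = l.count true := by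
    rw [← List.count_append, List.take_append_drop]
  omega

lemma ZD_symm (s : List Bool) {n : ℕ} (k : ℕ) (hk : k ≤ n) : ZD s n (n-k) = ZD s n k := by
  unfold ZD ZB
  rw [show n - (n-k) = k by omega]
  ring

lemma zw_eq {t s : List Bool} {n : ℕ} (hn : 1 ≤ n) (hl : t.length = n) (hs : s.length = n)
    (h : psM t = psM s) : ZW t = ZW s := by
  have hp := pair_of_psM hl hs h n hn le_rfl
  rw [List.take_of_length_le (le_of_eq hl), List.take_of_length_le (le_of_eq hs)] at hp
  unfold ZW
  rcases hp with ⟨e1, -⟩ | ⟨e1, e2⟩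
  · exact_mod_cast e1
  · rw [Nat.sub_self] at e1
    simp only [List.drop_zero] at e1
    exact_mod_cast e1

lemma zpc {t s : List Bool} {n : ℕ} (hl : t.length = n) (hs : s.length = n)
    (h : psM t = psM s) (ℓ : ℕ) (h1 : 1 ≤ ℓ) (h2 : ℓ ≤ n) :
    (ZP t ℓ = ZP s ℓ ∧ ZP t (n - ℓ) = ZP s (n - ℓ)) ∨
    (ZP t ℓ = ZB s n ℓ ∧ ZP t (n - ℓ) = ZB s n (n - ℓ)) := by
  have hw := zw_eq (le_trans h1 h2) hl hs h
  have hp := pair_of_psM hl hs h ℓ h1 h2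
  have d1 := ZP_drop t (n - ℓ)
  have d2 := ZP_drop s (n - ℓ)
  have e : n - (n - ℓ) = ℓ := by omega
  unfold ZB
  rw [e]
  unfold ZP ZW at d1 d2 hw ⊢
  rcases hp with ⟨e1, e2⟩ | ⟨e1, e2⟩
  · left; omega
  · right; omega

lemma noswitch {t s : List Bool} {n : ℕ} (hl : t.length = n) (hs : s.length = n)
    (h : psM t = psM s) (k : ℕ) (hk1 : 1 ≤ k) (hk : k + 1 ≤ n)
    (hd1 : ZD s n k ≠ 0) (hd2 : ZD s n (k+1) ≠ 0) :
    (ZP t k = ZP s k ↔ ZP t (k+1) = ZP s (k+1)) := by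
  have pck := zpc hl hs h k hk1 (by omega)
  have pck1 := zpc hl hs h (k+1) (by omega) hk
  have e1 : n - k = (n - (k+1)) + 1 := by omega
  have e2 : n - (n - (k+1)) = k + 1 := by omega
  have e3 : n - (n - k) = k := by omega
  have hps := ZP_step s k
  have hms := ZP_step s (n - (k+1))
  have hxs := ZP_step t k
  have hys := ZP_step t (n - (k+1))
  rw [← e1] at hms hys
  unfold ZD ZB at hd1 hd2
  unfold ZB at pck pck1
  rw [e2] at pck1
  rw [e3] at pck
  exact ns_aux (ZW s) (ZP s k) (ZP s (k+1)) (ZP s (n-(k+1))) (ZP s (n-k))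
    (ZP t k) (ZP t (k+1)) (ZP t (n-(k+1))) (ZP t (n-k)) hps hms hxs hys hd1 hd2 pck pck1

lemma determined {t t' s : List Bool} {n : ℕ} (hn : 2 ≤ n) (hs : s.length = n)
    (hl : t.length = n) (hl' : t'.length = n)
    (h : psM t = psM s) (h' : psM t' = psM s)
    (hM : ∀ k, 1 ≤ k → k ≤ n/2 → ZD s n k ≠ 0 → ZD s n (k-1) = 0 →
      (ZP t k = ZP s k ↔ ZP t' k = ZP s k)) :
    ∀ k, k ≤ n → ZP t k = ZP t' k := by
  have hzb : ∀ k, ZD s n k = 0 → ZB s n k = ZP s k := by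
    intro k hd
    unfold ZD at hd
    omega
  have half : ∀ k, k ≤ n/2 → ZP t k = ZP t' k := by
    intro k
    induction k using Nat.strong_induction_on with
    | _ k ih =>
      intro hk
      rcases Nat.eq_zero_or_pos k with rfl | hk1
      · rw [ZP_zero, ZP_zero]
      have hkn : k ≤ n := by omega
      have pt := zpc hl hs h k hk1 hkn
      have pt' := zpc hl' hs h' k hk1 hkn
      by_cases hd : ZD s n k = 0
      · have e := hzb k hd
        rcases pt with ⟨h1,-⟩|⟨h1,-⟩ <;> rcases pt' with ⟨h2,-⟩|⟨h2,-⟩ <;> omega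
      · have hBne : ZB s n k ≠ ZP s k := by unfold ZD at hd; omega
        by_cases hd0 : ZD s n (k-1) = 0
        · have hiff := hM k hk1 hk hd hd0
          rcases pt with ⟨h1,-⟩|⟨h1,-⟩ <;> rcases pt' with ⟨h2,-⟩|⟨h2,-⟩
          · rw [h1, h2]
          · exact absurd (h2.symm.trans (hiff.mp h1)) hBne
          · exact absurd (h1.symm.trans (hiff.mpr h2)) hBne
          · rw [h1, h2]
        · have hk2 : 2 ≤ k := by
            by_contra hc
            have hk1' : k = 1 := by omega
            apply hd0
            rw [hk1']
            have t1 := ZP_top s n (le_of_eq hs)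
            have t2 := ZP_zero s
            unfold ZD ZB
            simp only [Nat.sub_self, Nat.sub_zero]
            omega
          have ek : k - 1 + 1 = k := by omega
          have hprev := ih (k-1) (by omega) (by omega)
          have hdk : ZD s n (k-1+1) ≠ 0 := by rw [ek]; exact hd
          have i1 := noswitch hl hs h (k-1) (by omega) (by omega) hd0 hdk
          have i2 := noswitch hl' hs h' (k-1) (by omega) (by omega) hd0 hdk
          rw [ek] at i1 i2
          have hBne' : ZB s n (k-1) ≠ ZP s (k-1) := by unfold ZD at hd0; omega
          have pprev := zpc hl hs h (k-1) (by omega) (by omega)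
          have pprev' := zpc hl' hs h' (k-1) (by omega) (by omega)
          rcases pt with ⟨h1,-⟩|⟨h1,-⟩ <;> rcases pt' with ⟨h2,-⟩|⟨h2,-⟩
          · rw [h1, h2]
          · exfalso
            have a1 : ZP t (k-1) = ZP s (k-1) := i1.mpr h1
            have a2 : ZP t' (k-1) = ZP s (k-1) := hprev ▸ a1
            exact hBne (h2.symm.trans (i2.mp a2))
          · exfalso
            have a1 : ZP t' (k-1) = ZP s (k-1) := i2.mpr h2
            have a2 : ZP t (k-1) = ZP s (k-1) := hprev.symm ▸ a1
            exact hBne (h1.symm.trans (i1.mp a2))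
          · rw [h1, h2]
  intro k hkn
  by_cases hk : k ≤ n/2
  · exact half k hk
  · rcases eq_or_ne k n with rfl | hkne
    · rw [ZP_top t k (le_of_eq hl), ZP_top t' k (le_of_eq hl')]
      exact (zw_eq (by omega) hl hs h).trans (zw_eq (by omega) hl' hs h').symm
    · have hk'1 : 1 ≤ n - k := by omega
      have hk'h : n - k ≤ n/2 := by omega
      have e : n - (n - k) = k := by omega
      have pt := zpc hl hs h (n-k) hk'1 (by omega)
      have pt' := zpc hl' hs h' (n-k) hk'1 (by omega)
      rw [e] at pt pt'
      have hhalf := half (n-k) hk'h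
      by_cases hd : ZD s n (n-k) = 0
      · have hds : ZD s n k = 0 := by
          rw [← e, ZD_symm s (n-k) (by omega)]
          exact hd
        have eb := hzb k hds
        rcases pt with ⟨-,h1⟩|⟨-,h1⟩ <;> rcases pt' with ⟨-,h2⟩|⟨-,h2⟩ <;> omega
      · have hBne : ZB s n (n-k) ≠ ZP s (n-k) := by unfold ZD at hd; omega
        rcases pt with ⟨g1,h1⟩|⟨g1,h1⟩ <;> rcases pt' with ⟨g2,h2⟩|⟨g2,h2⟩
        · rw [h1, h2]
        · exact absurd (g2.symm.trans (hhalf.symm.trans g1)) hBne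
        · exact absurd (g1.symm.trans (hhalf.trans g2)) hBne
        · rw [h1, h2]

lemma eq_of_prefix_counts : ∀ {t t' : List Bool}, t.length = t'.length →
    (∀ k, (t.take k).count true = (t'.take k).count true) → t = t' := by
  intro t
  induction t with
  | nil =>
    intro t' hl _
    exact (List.length_eq_zero_iff.mp hl.symm).symm
  | cons a l ih =>
    intro t' hl hc
    cases t' with
    | nil => simp at hl
    | cons a' l' =>
      have h1 := hc 1
      simp only [List.take_succ_cons, List.take_zero] at h1
      have ha : a = a' := by
        revert h1
        cases a <;> cases a' <;> simp
      subst ha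
      have : l = l' := by
        apply ih
        · simpa using hl
        · intro k
          have h2 := hc (k+1)
          simp only [List.take_succ_cons, List.count_cons] at h2
          omega
      rw [this]

lemma upper_bound {s : List Bool} {n : ℕ} (hn : 2 ≤ n) (hs : s.length = n) :
    {t : List Bool | t.length = n ∧ psM t = psM s}.ncard ≤ 2 ^ ((n - 2) / 4 + 1) ∧
    {t : List Bool | t.length = n ∧ psM t = psM s}.Finite := by
  classical
  set C := {t : List Bool | t.length = n ∧ psM t = psM s} with hC
  set M : Finset ℕ := (Finset.range (n/2+1)).filter
      (fun k => 1 ≤ k ∧ ZD s n k ≠ 0 ∧ ZD s n (k-1) = 0) with hMdef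
  set Φ : List Bool → Finset ℕ := fun t => M.filter (fun k => ZP t k = ZP s k) with hΦ
  have hmaps : ∀ t ∈ C, Φ t ∈ (↑M.powerset : Set (Finset ℕ)) := by
    intro t _
    simp only [Finset.coe_powerset, Set.mem_preimage, Set.mem_powerset_iff, hΦ,
      Finset.coe_subset]
    exact Finset.filter_subset _ _
  have hinj : Set.InjOn Φ C := by
    intro t ht t' ht' he
    obtain ⟨hl, h⟩ := ht
    obtain ⟨hl', h'⟩ := ht'
    have hMk : ∀ k, 1 ≤ k → k ≤ n/2 → ZD s n k ≠ 0 → ZD s n (k-1) = 0 →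
        (ZP t k = ZP s k ↔ ZP t' k = ZP s k) := by
      intro k h1 h2 h3 h4
      have hkM : k ∈ M := by
        rw [hMdef, Finset.mem_filter, Finset.mem_range]
        exact ⟨by omega, h1, h3, h4⟩
      constructor
      · intro hh
        have hmem : k ∈ Φ t := by
          rw [hΦ]; exact Finset.mem_filter.mpr ⟨hkM, hh⟩
        rw [he] at hmem
        rw [hΦ] at hmem
        exact (Finset.mem_filter.mp hmem).2
      · intro hh
        have hmem : k ∈ Φ t' := by
          rw [hΦ]; exact Finset.mem_filter.mpr ⟨hkM, hh⟩
        rw [← he] at hmem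
        rw [hΦ] at hmem
        exact (Finset.mem_filter.mp hmem).2
    have hall := determined hn hs hl hl' h h' hMk
    apply eq_of_prefix_counts (hl.trans hl'.symm)
    intro k
    by_cases hk : k ≤ n
    · have hzz := hall k hk
      unfold ZP at hzz
      exact_mod_cast hzz
    · rw [List.take_of_length_le (by omega), List.take_of_length_le (by omega)]
      have hzz := hall n le_rfl
      rw [ZP_top t n (le_of_eq hl), ZP_top t' n (le_of_eq hl')] at hzz
      unfold ZW at hzz
      exact_mod_cast hzz
  have hfin : C.Finite := Set.Finite.of_finite_image
      (Set.Finite.subset (M.powerset.finite_toSet) (Set.image_subset_iff.mpr hmaps)) hinj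
  refine ⟨?_, hfin⟩
  have hcard : C.ncard ≤ (↑M.powerset : Set (Finset ℕ)).ncard :=
    Set.ncard_le_ncard_of_injOn Φ hmaps hinj (M.powerset.finite_toSet)
  rw [Set.ncard_coe_finset, Finset.card_powerset] at hcard
  have hMcard : M.card ≤ (n-2)/4 + 1 := by
    have hinj2 : M.card ≤ (Finset.range ((n/2-1)/2+1)).card := by
      apply Finset.card_le_card_of_injOn (fun k => (k-1)/2)
      · intro k hk
        rw [hMdef, Finset.mem_coe, Finset.mem_filter, Finset.mem_range] at hk
        simp only [Finset.mem_coe, Finset.mem_range]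
        omega
      · intro k hk k' hk' he2
        simp only [Finset.coe_filter, Set.mem_setOf_eq, Finset.mem_range, hMdef] at hk hk'
        by_contra hne
        simp only at he2
        have hcons : k' = k+1 ∨ k = k'+1 := by omega
        rcases hcons with rfl|rfl
        · exact hk.2.2.1 (by simpa using hk'.2.2.2)
        · exact hk'.2.2.1 (by simpa using hk.2.2.2)
    rw [Finset.card_range] at hinj2
    omega
  calc C.ncard ≤ 2^M.card := hcard
    _ ≤ 2^((n-2)/4+1) := Nat.pow_le_pow_right (by norm_num) hMcard
lemma take_sandwich (x D : List Bool) (hD : D.length = 2) (j : ℕ) (hj : j ≤ x.length) :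
    (D ++ (x ++ D)).take (2 + j + 1) = D ++ (x.take (j + 1) ++ D.take (j + 1 - x.length)) := by
  rw [List.take_append, List.take_of_length_le (by omega), hD,
    show 2 + j + 1 - 2 = j + 1 by omega, List.take_append]

lemma drop_sandwich (x D : List Bool) (hD : D.length = 2) (j : ℕ) (hj : j ≤ x.length) :
    (D ++ (x ++ D)).drop (2 + j) = x.drop j ++ D := by
  rw [List.drop_append, List.drop_eq_nil_of_le (by omega), hD,
    show 2 + j - 2 = j by omega, List.drop_append,
    show j - x.length = 0 by omega, List.drop_zero, List.nil_append]
lemma psM_sandwich01 (x : List Bool) :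
    psM ([false, true] ++ (x ++ [false, true])) =
      ({(1,0),(1,1),(2,1),(2,1),
        (x.length+3, x.count true+1),(x.length+3, x.count true+2),
        (x.length+4, x.count true+2),(x.length+4, x.count true+2)} : Multiset (ℕ×ℕ))
      + Multiset.map (fun p => (p.1+2, p.2+1)) (psM x) := by
  set D : List Bool := [false, true] with hDdef
  have hDl : D.length = 2 := rfl
  have hDc : D.count true = 1 := rfl
  have hlen : (D ++ (x ++ D)).length = 2 + x.length + 2 := by
    simp only [List.length_append, hDl]; omega
  rw [psM, psM, hlen, List.range_add, List.range_add]
  have hr2 : List.range 2 = [0, 1] := rfl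
  simp only [hr2, List.map_append, List.map_map, List.map_cons, List.map_nil,
    Function.comp_def, Multiset.map_add, Multiset.map_coe, List.map_map, Nat.add_zero]
  have hmid1 : List.map (fun a => comp ((D ++ (x ++ D)).take (2 + a + 1))) (List.range x.length)
      = List.map (fun j => ((comp (x.take (j+1))).1 + 2, (comp (x.take (j+1))).2 + 1))
          (List.range x.length) := by
    apply List.map_congr_left
    intro j hj
    rw [List.mem_range] at hj
    rw [take_sandwich x D hDl j (by omega), show j + 1 - x.length = 0 by omega,
      List.take_zero, List.append_nil]
    simp only [comp, List.length_append, List.count_append, hDl, hDc, Prod.mk.injEq]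
    omega
  have hmid2 : List.map (fun a => comp ((D ++ (x ++ D)).drop (2 + a))) (List.range x.length)
      = List.map (fun i => ((comp (x.drop i)).1 + 2, (comp (x.drop i)).2 + 1))
          (List.range x.length) := by
    apply List.map_congr_left
    intro j hj
    rw [List.mem_range] at hj
    rw [drop_sandwich x D hDl j (by omega)]
    simp only [comp, List.length_append, List.count_append, hDl, hDc, Prod.mk.injEq]
  rw [hmid1, hmid2]
  have b1 : comp ((D ++ (x ++ D)).take (0 + 1)) = ((1:ℕ), (0:ℕ)) := rfl
  have b2 : comp ((D ++ (x ++ D)).take (1 + 1)) = ((2:ℕ), (1:ℕ)) := rfl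
  have b3 : comp ((D ++ (x ++ D)).take (2 + x.length + 1))
      = (x.length + 3, x.count true + 1) := by
    rw [take_sandwich x D hDl x.length le_rfl,
      List.take_of_length_le (by omega), show x.length + 1 - x.length = 1 by omega]
    show comp (D ++ (x ++ [false])) = _
    simp [comp, List.length_append, List.count_append] <;> omega
  have b4 : comp ((D ++ (x ++ D)).take (2 + x.length + 1 + 1))
      = (x.length + 4, x.count true + 2) := by
    rw [List.take_of_length_le (by rw [hlen])]
    simp only [comp, List.length_append, List.count_append, hDl, hDc, Prod.mk.injEq]
    omega
  have b5 : comp ((D ++ (x ++ D)).drop 0) = (x.length + 4, x.count true + 2) := by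
    rw [List.drop_zero]
    simp only [comp, List.length_append, List.count_append, hDl, hDc, Prod.mk.injEq]
    omega
  have b6 : comp ((D ++ (x ++ D)).drop 1) = (x.length + 3, x.count true + 2) := by
    show comp (true :: (x ++ D)) = _
    simp only [comp, List.length_cons, List.length_append, List.count_cons,
      List.count_append, hDl, hDc, Prod.mk.injEq]
    simp <;> omega
  have b7 : comp ((D ++ (x ++ D)).drop (2 + x.length)) = ((2:ℕ), (1:ℕ)) := by
    rw [drop_sandwich x D hDl x.length le_rfl, List.drop_length, List.nil_append]
    rfl
  have b8 : comp ((D ++ (x ++ D)).drop (2 + x.length + 1)) = ((1:ℕ), (1:ℕ)) := by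
    have e8 : (D ++ (x ++ D)).drop (2 + x.length + 1) = D.drop 1 := by
      rw [List.drop_append, List.drop_eq_nil_of_le (by rw [hDl]; omega),
        List.nil_append, List.drop_append,
        List.drop_eq_nil_of_le (by omega), List.nil_append,
        show 2 + x.length + 1 - D.length - x.length = 1 by rw [hDl]; omega]
    rw [e8]
    rfl
  rw [b1, b2, b3, b4, b5, b6, b7, b8]
  simp only [← Multiset.coe_add, ← Multiset.cons_coe, Multiset.coe_nil,
    Multiset.insert_eq_cons, ← Multiset.singleton_add]
  abel

lemma psM_sandwich10 (x : List Bool) :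
    psM ([true, false] ++ (x ++ [true, false])) =
      ({(1,0),(1,1),(2,1),(2,1),
        (x.length+3, x.count true+1),(x.length+3, x.count true+2),
        (x.length+4, x.count true+2),(x.length+4, x.count true+2)} : Multiset (ℕ×ℕ))
      + Multiset.map (fun p => (p.1+2, p.2+1)) (psM x) := by
  set D : List Bool := [true, false] with hDdef
  have hDl : D.length = 2 := rfl
  have hDc : D.count true = 1 := rfl
  have hlen : (D ++ (x ++ D)).length = 2 + x.length + 2 := by
    simp only [List.length_append, hDl]; omega
  rw [psM, psM, hlen, List.range_add, List.range_add]
  have hr2 : List.range 2 = [0, 1] := rfl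
  simp only [hr2, List.map_append, List.map_map, List.map_cons, List.map_nil,
    Function.comp_def, Multiset.map_add, Multiset.map_coe, List.map_map, Nat.add_zero]
  have hmid1 : List.map (fun a => comp ((D ++ (x ++ D)).take (2 + a + 1))) (List.range x.length)
      = List.map (fun j => ((comp (x.take (j+1))).1 + 2, (comp (x.take (j+1))).2 + 1))
          (List.range x.length) := by
    apply List.map_congr_left
    intro j hj
    rw [List.mem_range] at hj
    rw [take_sandwich x D hDl j (by omega), show j + 1 - x.length = 0 by omega,
      List.take_zero, List.append_nil]
    simp only [comp, List.length_append, List.count_append, hDl, hDc, Prod.mk.injEq]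
    omega
  have hmid2 : List.map (fun a => comp ((D ++ (x ++ D)).drop (2 + a))) (List.range x.length)
      = List.map (fun i => ((comp (x.drop i)).1 + 2, (comp (x.drop i)).2 + 1))
          (List.range x.length) := by
    apply List.map_congr_left
    intro j hj
    rw [List.mem_range] at hj
    rw [drop_sandwich x D hDl j (by omega)]
    simp only [comp, List.length_append, List.count_append, hDl, hDc, Prod.mk.injEq]
  rw [hmid1, hmid2]
  have b1 : comp ((D ++ (x ++ D)).take (0 + 1)) = ((1:ℕ), (1:ℕ)) := rfl
  have b2 : comp ((D ++ (x ++ D)).take (1 + 1)) = ((2:ℕ), (1:ℕ)) := rfl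
  have b3 : comp ((D ++ (x ++ D)).take (2 + x.length + 1))
      = (x.length + 3, x.count true + 2) := by
    rw [take_sandwich x D hDl x.length le_rfl,
      List.take_of_length_le (by omega), show x.length + 1 - x.length = 1 by omega]
    show comp (D ++ (x ++ [true])) = _
    simp [comp, List.length_append, List.count_append] <;> omega
  have b4 : comp ((D ++ (x ++ D)).take (2 + x.length + 1 + 1))
      = (x.length + 4, x.count true + 2) := by
    rw [List.take_of_length_le (by rw [hlen])]
    simp only [comp, List.length_append, List.count_append, hDl, hDc, Prod.mk.injEq]
    omega
  have b5 : comp ((D ++ (x ++ D)).drop 0) = (x.length + 4, x.count true + 2) := by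
    rw [List.drop_zero]
    simp only [comp, List.length_append, List.count_append, hDl, hDc, Prod.mk.injEq]
    omega
  have b6 : comp ((D ++ (x ++ D)).drop 1) = (x.length + 3, x.count true + 1) := by
    show comp (false :: (x ++ D)) = _
    simp only [comp, List.length_cons, List.length_append, List.count_cons,
      List.count_append, hDl, hDc, Prod.mk.injEq]
    simp <;> omega
  have b7 : comp ((D ++ (x ++ D)).drop (2 + x.length)) = ((2:ℕ), (1:ℕ)) := by
    rw [drop_sandwich x D hDl x.length le_rfl, List.drop_length, List.nil_append]
    rfl
  have b8 : comp ((D ++ (x ++ D)).drop (2 + x.length + 1)) = ((1:ℕ), (0:ℕ)) := by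
    have e8 : (D ++ (x ++ D)).drop (2 + x.length + 1) = D.drop 1 := by
      rw [List.drop_append, List.drop_eq_nil_of_le (by rw [hDl]; omega),
        List.nil_append, List.drop_append,
        List.drop_eq_nil_of_le (by omega), List.nil_append,
        show 2 + x.length + 1 - D.length - x.length = 1 by rw [hDl]; omega]
    rw [e8]
    rfl
  rw [b1, b2, b3, b4, b5, b6, b7, b8]
  simp only [← Multiset.coe_add, ← Multiset.cons_coe, Multiset.coe_nil,
    Multiset.insert_eq_cons, ← Multiset.singleton_add]
  abel
def fam (r : ℕ) : ℕ → List (List Bool)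
  | 0 => [List.replicate r false ++ [false, true], [true, false] ++ List.replicate r false]
  | j+1 => ((fam r j).map (fun x => [false,true] ++ (x ++ [false,true])))
        ++ ((fam r j).map (fun x => [true,false] ++ (x ++ [true,false])))

lemma fam_length (r j : ℕ) : ∀ x ∈ fam r j, x.length = 4*j + r + 2 := by
  induction j with
  | zero =>
    intro x hx
    simp only [fam, List.mem_cons, List.not_mem_nil, or_false] at hx
    rcases hx with rfl | rfl <;> simp <;> omega
  | succ j ih =>
    intro x hx
    rw [fam, List.mem_append] at hx
    rcases hx with hx | hx <;> obtain ⟨y, hy, rfl⟩ := List.mem_map.mp hx <;>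
      simp [List.length_append, ih y hy] <;> omega

lemma fam_count (r j : ℕ) : ∀ x ∈ fam r j, x.count true = 2*j + 1 := by
  induction j with
  | zero =>
    intro x hx
    simp only [fam, List.mem_cons, List.not_mem_nil, or_false] at hx
    rcases hx with rfl | rfl <;> simp [List.count_append, List.count_replicate]
  | succ j ih =>
    intro x hx
    rw [fam, List.mem_append] at hx
    rcases hx with hx | hx <;> obtain ⟨y, hy, rfl⟩ := List.mem_map.mp hx <;>
      simp [List.count_append, ih y hy] <;> omega

lemma fam_psM (r : ℕ) (hr : r < 4) (j : ℕ) :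
    ∀ x ∈ fam r j, ∀ y ∈ fam r j, psM x = psM y := by
  induction j with
  | zero =>
    have base : psM (List.replicate r false ++ [false, true])
        = psM ([true, false] ++ List.replicate r false) := by
      interval_cases r <;> decide
    intro x hx y hy
    simp only [fam, List.mem_cons, List.not_mem_nil, or_false] at hx hy
    rcases hx with rfl | rfl <;> rcases hy with rfl | rfl
    · rfl
    · exact base
    · exact base.symm
    · rfl
  | succ j ih =>
    intro x hx y hy
    rw [fam, List.mem_append] at hx hy
    have key : ∀ z ∈ fam r j, ∀ w ∈ fam r j,
        ∀ D₁ ∈ [([false,true] : List Bool), [true,false]], ∀ D₂ ∈ [([false,true] : List Bool), [true,false]],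
        psM (D₁ ++ (z ++ D₁)) = psM (D₂ ++ (w ++ D₂)) := by
      intro z hz w hw D₁ hD₁ D₂ hD₂
      have hl : z.length = w.length := by
        rw [fam_length r j z hz, fam_length r j w hw]
      have hc : z.count true = w.count true := by
        rw [fam_count r j z hz, fam_count r j w hw]
      have hp := ih z hz w hw
      have e1 : ∀ D ∈ [([false,true] : List Bool), [true,false]], psM (D ++ (z ++ D)) =
          ({(1,0),(1,1),(2,1),(2,1),
            (z.length+3, z.count true+1),(z.length+3, z.count true+2),
            (z.length+4, z.count true+2),(z.length+4, z.count true+2)} : Multiset (ℕ×ℕ))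
          + Multiset.map (fun p => (p.1+2, p.2+1)) (psM z) := by
        intro D hD
        simp only [List.mem_cons, List.not_mem_nil, or_false] at hD
        rcases hD with rfl | rfl
        · exact psM_sandwich01 z
        · exact psM_sandwich10 z
      have e2 : ∀ D ∈ [([false,true] : List Bool), [true,false]], psM (D ++ (w ++ D)) =
          ({(1,0),(1,1),(2,1),(2,1),
            (w.length+3, w.count true+1),(w.length+3, w.count true+2),
            (w.length+4, w.count true+2),(w.length+4, w.count true+2)} : Multiset (ℕ×ℕ))
          + Multiset.map (fun p => (p.1+2, p.2+1)) (psM w) := by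
        intro D hD
        simp only [List.mem_cons, List.not_mem_nil, or_false] at hD
        rcases hD with rfl | rfl
        · exact psM_sandwich01 w
        · exact psM_sandwich10 w
      rw [e1 D₁ hD₁, e2 D₂ hD₂, hl, hc, hp]
    rcases hx with hx | hx <;> obtain ⟨z, hz, rfl⟩ := List.mem_map.mp hx <;>
      rcases hy with hy | hy <;> obtain ⟨w, hw, rfl⟩ := List.mem_map.mp hy <;>
      apply key _ hz _ hw <;> simp

lemma fam_len_list (r j : ℕ) : (fam r j).length = 2^(j+1) := by
  induction j with
  | zero => rfl
  | succ j ih => rw [fam]; simp [ih]; ring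

lemma fam_nodup (r : ℕ) (hr : r < 4) (j : ℕ) : (fam r j).Nodup := by
  induction j with
  | zero =>
    have hne2 : List.replicate r false ++ [false, true] ≠ true :: false :: List.replicate r false := by
      interval_cases r <;> decide
    simp [fam, hne2]
  | succ j ih =>
    rw [fam]
    apply List.Nodup.append
    · apply ih.map
      intro a b h
      have h1 := List.append_cancel_left h
      exact List.append_cancel_right h1
    · apply ih.map
      intro a b h
      have h1 := List.append_cancel_left h
      exact List.append_cancel_right h1
    · intro a ha hb
      obtain ⟨z, hz, rfl⟩ := List.mem_map.mp ha
      obtain ⟨w, hw, heq⟩ := List.mem_map.mp hb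
      simp at heq


theorem max_card_equivalent_strings (n : ℕ) (hn : 2 ≤ n) :
    (∀ s : List Bool, s.length = n →
        {t : List Bool | t.length = n ∧ psM t = psM s}.ncard ≤ 2 ^ ((n - 2) / 4 + 1)) ∧
    (∃ s : List Bool, s.length = n ∧
        {t : List Bool | t.length = n ∧ psM t = psM s}.ncard = 2 ^ ((n - 2) / 4 + 1)) := by
  constructor
  · intro s hs
    exact (upper_bound hn hs).1
  · set j := (n-2)/4 with hj
    set r := (n-2)%4 with hr
    have hr4 : r < 4 := Nat.mod_lt _ (by norm_num)
    have hn4 : 4*j + r + 2 = n := by omega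
    have hne : fam r j ≠ [] := by
      intro h
      have hl := fam_len_list r j
      rw [h] at hl
      have hp : 0 < 2 ^ (j+1) := Nat.pow_pos (by norm_num)
      exact absurd hl.symm hp.ne'
    obtain ⟨s, hs⟩ := List.exists_mem_of_ne_nil _ hne
    have hslen : s.length = n := by rw [fam_length r j s hs]; omega
    refine ⟨s, hslen, ?_⟩
    have hub := upper_bound hn hslen
    refine le_antisymm hub.1 ?_
    have hsub : (↑(fam r j).toFinset : Set (List Bool)) ⊆
        {t : List Bool | t.length = n ∧ psM t = psM s} := by
      intro t ht
      rw [Finset.mem_coe, List.mem_toFinset] at ht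
      exact ⟨by rw [fam_length r j t ht]; omega, fam_psM r hr4 j t ht s hs⟩
    have hcard := Set.ncard_le_ncard hsub hub.2
    rw [Set.ncard_coe_finset, List.toFinset_card_of_nodup (fam_nodup r hr4 j),
      fam_len_list] at hcard
    exact hcard
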